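/- Let A, B be real n×n positive semidefinite matrices with A = LLᵀ and B = MMᵀ. Then dist_BW(A, B) = min over orthogonal Q ∈ O(n) of ‖L − MQ‖_F. -/

import Mathlib

open Matrix BigOperators Classical

/-- Squared Frobenius norm. -/
def frobSq {m n : Type*} [Fintype m] [Fintype n] (C : Matrix m n ℝ) : ℝ :=
  ∑ i, ∑ j, (C i j) ^ 2

/-- Frobenius norm. -/
noncomputable def frobNorm {m n : Type*} [Fintype m] [Fintype n]
    (C : Matrix m n ℝ) : ℝ :=
  Real.sqrt (frobSq C)

/-- Square root of a positive semidefinite matrix (junk value `0` otherwise). -/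
noncomputable def psdSqrt {n : Type*} [Fintype n] [DecidableEq n]
    (A : Matrix n n ℝ) : Matrix n n ℝ :=
  if h : A.PosSemidef then
    h.1.eigenvectorUnitary.1 * diagonal ((RCLike.ofReal : ℝ → ℝ) ∘ (Real.sqrt ∘ h.1.eigenvalues)) *
      (star h.1.eigenvectorUnitary : Matrix n n ℝ)
  else 0

/-- Nuclear norm: `‖C‖₊ = tr((CᵀC)^{1/2})`, the sum of the singular values. -/
noncomputable def nuclearNorm {m n : Type*} [Fintype m] [Fintype n] [DecidableEq n]
    (C : Matrix m n ℝ) : ℝ :=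
  (psdSqrt (Cᵀ * C)).trace

/-- Squared Bures–Wasserstein distance:
`dist_BW²(A,B) = tr A + tr B − 2 tr((A^{1/2} B A^{1/2})^{1/2})`. -/
noncomputable def distBWsq {n : Type*} [Fintype n] [DecidableEq n]
    (A B : Matrix n n ℝ) : ℝ :=
  A.trace + B.trace - 2 * (psdSqrt (psdSqrt A * B * psdSqrt A)).trace


/-- The square root of a positive semidefinite real matrix (port helper). -/
noncomputable def Matrix.PosSemidef.sqrt {n : Type*} [Fintype n] [DecidableEq n]
    {A : Matrix n n ℝ} (h : A.PosSemidef) : Matrix n n ℝ :=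
  h.1.eigenvectorUnitary.1 * diagonal ((RCLike.ofReal : ℝ → ℝ) ∘ (Real.sqrt ∘ h.1.eigenvalues)) *
    (star h.1.eigenvectorUnitary : Matrix n n ℝ)

open scoped MatrixOrder in
lemma Matrix.PosSemidef.sqrt_eq_cfc {n : Type*} [Fintype n] [DecidableEq n]
    {A : Matrix n n ℝ} (h : A.PosSemidef) : h.sqrt = CFC.sqrt A := by
  rw [CFC.sqrt_eq_cfc, cfc_nnreal_eq_real _ A h.nonneg, h.1.cfc_eq]
  simp only [IsHermitian.cfc, Matrix.PosSemidef.sqrt, Unitary.conjStarAlgAut_apply]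
  congr 3
  funext i
  simp [Real.coe_sqrt, Real.coe_toNNReal', h.eigenvalues_nonneg i]

open scoped MatrixOrder in
lemma Matrix.PosSemidef.sqrt_mul_self {n : Type*} [Fintype n] [DecidableEq n]
    {A : Matrix n n ℝ} (h : A.PosSemidef) : h.sqrt * h.sqrt = A := by
  rw [h.sqrt_eq_cfc]; exact CFC.sqrt_mul_sqrt_self A h.nonneg

open scoped MatrixOrder in
lemma Matrix.PosSemidef.posSemidef_sqrt {n : Type*} [Fintype n] [DecidableEq n]
    {A : Matrix n n ℝ} (h : A.PosSemidef) : h.sqrt.PosSemidef := by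
  rw [h.sqrt_eq_cfc]; exact (CFC.sqrt_nonneg A).posSemidef

open scoped MatrixOrder in
lemma Matrix.PosSemidef.eq_sqrt_of_sq_eq {n : Type*} [Fintype n] [DecidableEq n]
    {A B : Matrix n n ℝ} (hA : A.PosSemidef) (hB : B.PosSemidef) (hAB : A ^ 2 = B) :
    A = hB.sqrt := by
  rw [hB.sqrt_eq_cfc]; exact (CFC.sqrt_unique (by rw [← sq]; exact hAB) hA.nonneg).symm

lemma col_extension {n : ℕ} (W : Matrix (Fin n) (Fin n) ℝ) (μ σ : Fin n → ℝ)
    (hWW : Wᵀ * W = diagonal μ) (hσsq : ∀ i, σ i ^ 2 = μ i) :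
    ∃ U : Matrix (Fin n) (Fin n) ℝ, Uᵀ * U = 1 ∧ U * diagonal σ = W := by
  classical
  have hsum : ∀ i j, ∑ k, W k i * W k j = diagonal μ i j := by
    intro i j
    have := congrFun (congrFun hWW i) j
    simpa [mul_apply, transpose_apply] using this
  have hzero : ∀ j, σ j = 0 → ∀ k, W k j = 0 := by
    intro j hj k
    have h1 : ∑ k, W k j * W k j = 0 := by
      rw [hsum j j]; simp [diagonal_apply_eq, ← hσsq j, hj]
    have h2 : ∀ k ∈ Finset.univ, (0:ℝ) ≤ W k j * W k j := fun k _ => mul_self_nonneg _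
    have := (Finset.sum_eq_zero_iff_of_nonneg h2).mp h1 k (Finset.mem_univ k)
    exact mul_self_eq_zero.mp this
  set v : Fin n → EuclideanSpace ℝ (Fin n) := fun j => (σ j)⁻¹ • WithLp.toLp 2 (fun k => W k j) with hvdef
  set s : Set (Fin n) := {j | σ j ≠ 0} with hsdef
  have hvon : Orthonormal ℝ (s.restrict v) := by
    rw [orthonormal_iff_ite]
    rintro ⟨i, hi⟩ ⟨j, hj⟩
    show inner ℝ (v i) (v j) = _
    have hinner : (inner ℝ (v i) (v j) : ℝ) = (σ i)⁻¹ * (σ j)⁻¹ * diagonal μ i j := by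
      simp only [hvdef, PiLp.inner_apply, RCLike.inner_apply, starRingEnd_apply, star_trivial,
        PiLp.smul_apply, PiLp.toLp_apply, Pi.smul_apply, smul_eq_mul]
      rw [← hsum i j, Finset.mul_sum]
      congr 1; ext k; ring
    rw [hinner]
    by_cases hij : i = j
    · subst hij
      simp only [diagonal_apply_eq, ← hσsq i]
      have hσi : σ i ≠ 0 := hi
      rw [if_true]
      field_simp
    · rw [diagonal_apply_ne _ hij, if_neg (by simpa using hij)]
      ring
  obtain ⟨b, hb⟩ := hvon.exists_orthonormalBasis_extension_of_card_eq (by simp)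
  set U : Matrix (Fin n) (Fin n) ℝ := Matrix.of (fun k j => b j k) with hUdef
  have hU : Uᵀ * U = 1 := by
    ext i j
    have := b.orthonormal
    rw [orthonormal_iff_ite] at this
    have h2 := this i j
    simp only [PiLp.inner_apply, RCLike.inner_apply, starRingEnd_apply, star_trivial] at h2
    simp only [mul_apply, transpose_apply, hUdef, of_apply, one_apply]
    rw [← h2]
    exact Finset.sum_congr rfl (fun _ _ => mul_comm _ _)
  have hUW : U * diagonal σ = W := by
    ext k j
    rw [mul_diagonal]
    by_cases hj : σ j = 0
    · simp [hzero j hj k, hj]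
    · have : b j = v j := hb j hj
      simp only [hUdef, of_apply, this, hvdef, PiLp.smul_apply, PiLp.toLp_apply, Pi.smul_apply, smul_eq_mul]
      field_simp
  exact ⟨U, hU, hUW⟩

lemma exists_svd {n : ℕ} (C : Matrix (Fin n) (Fin n) ℝ) :
    ∃ U V : Matrix (Fin n) (Fin n) ℝ, ∃ σ : Fin n → ℝ,
      Uᵀ * U = 1 ∧ Vᵀ * V = 1 ∧ (∀ i, 0 ≤ σ i) ∧ C = U * diagonal σ * Vᵀ := by
  have hPSD : (Cᵀ * C).PosSemidef := posSemidef_conjTranspose_mul_self C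
  have hH : (Cᵀ * C).IsHermitian := hPSD.isHermitian
  set V : Matrix (Fin n) (Fin n) ℝ := (IsHermitian.eigenvectorUnitary hH : Matrix (Fin n) (Fin n) ℝ) with hVdef
  have hV : Vᵀ * V = 1 := by
    have := (Matrix.mem_unitaryGroup_iff').mp (IsHermitian.eigenvectorUnitary hH).2
    simpa [hVdef, star_eq_conjTranspose, conjTranspose_eq_transpose_of_trivial, starRingEnd_apply, star_trivial, map_id'] using this
  have hVV : V * Vᵀ = 1 := mul_eq_one_comm.mp hV
  set μ : Fin n → ℝ := hH.eigenvalues with hμdef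
  have hμ0 : ∀ i, 0 ≤ μ i := fun i => hPSD.eigenvalues_nonneg i
  set σ : Fin n → ℝ := fun i => Real.sqrt (μ i) with hσdef
  have hσ0 : ∀ i, 0 ≤ σ i := fun i => Real.sqrt_nonneg _
  have hσsq : ∀ i, σ i ^ 2 = μ i := fun i => Real.sq_sqrt (hμ0 i)
  have hspec : Cᵀ * C = V * diagonal μ * Vᵀ := by
    have := hH.spectral_theorem
    simpa [hVdef, star_eq_conjTranspose, conjTranspose_eq_transpose_of_trivial, Function.comp, starRingEnd_apply, star_trivial, map_id'] using this
  set W : Matrix (Fin n) (Fin n) ℝ := C * V with hWdef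
  have hWW : Wᵀ * W = diagonal μ := by
    have h1 : Wᵀ * W = Vᵀ * (Cᵀ * C) * V := by
      simp [hWdef, transpose_mul, mul_assoc]
    rw [h1, hspec]
    calc Vᵀ * (V * diagonal μ * Vᵀ) * V
        = (Vᵀ * V) * diagonal μ * (Vᵀ * V) := by simp [mul_assoc]
      _ = diagonal μ := by rw [hV]; simp
  obtain ⟨U, hU, hUW⟩ := col_extension W μ σ hWW hσsq
  refine ⟨U, V, σ, hU, hV, hσ0, ?_⟩
  rw [hUW, hWdef, mul_assoc, hVV, mul_one]

lemma psdSqrt_eq {n : ℕ} {A : Matrix (Fin n) (Fin n) ℝ} (h : A.PosSemidef) :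
    psdSqrt A = h.sqrt := dif_pos h

lemma transpose_eq_conjTranspose {n : ℕ} (A : Matrix (Fin n) (Fin n) ℝ) : Aᵀ = Aᴴ := by
  ext i j; simp [conjTranspose_apply]

lemma psdSqrt_conj {n : ℕ} (V : Matrix (Fin n) (Fin n) ℝ) (σ : Fin n → ℝ)
    (hV : Vᵀ * V = 1) (hσ : ∀ i, 0 ≤ σ i) :
    psdSqrt (V * diagonal (fun i => σ i ^ 2) * Vᵀ) = V * diagonal σ * Vᵀ := by
  have hD : (diagonal σ).PosSemidef := posSemidef_diagonal_iff.mpr hσ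
  have hD2 : (diagonal (fun i => σ i ^ 2)).PosSemidef :=
    posSemidef_diagonal_iff.mpr (fun i => sq_nonneg _)
  have hP : (V * diagonal σ * Vᵀ).PosSemidef := by
    rw [transpose_eq_conjTranspose]
    exact hD.mul_mul_conjTranspose_same V
  have hB : (V * diagonal (fun i => σ i ^ 2) * Vᵀ).PosSemidef := by
    rw [transpose_eq_conjTranspose]
    exact hD2.mul_mul_conjTranspose_same V
  have hsq : (V * diagonal σ * Vᵀ) ^ 2 = V * diagonal (fun i => σ i ^ 2) * Vᵀ := by
    rw [pow_two]
    calc V * diagonal σ * Vᵀ * (V * diagonal σ * Vᵀ)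
        = V * diagonal σ * (Vᵀ * V) * diagonal σ * Vᵀ := by
          simp only [mul_assoc]
      _ = V * (diagonal σ * diagonal σ) * Vᵀ := by rw [hV]; simp only [mul_one, mul_assoc]
      _ = V * diagonal (fun i => σ i ^ 2) * Vᵀ := by
          rw [diagonal_mul_diagonal]; congr 1; ext i; ring_nf
  rw [psdSqrt_eq hB, ← hP.eq_sqrt_of_sq_eq hB hsq]

lemma trace_conj {n : ℕ} (V D : Matrix (Fin n) (Fin n) ℝ) (hV : Vᵀ * V = 1) :
    (V * D * Vᵀ).trace = D.trace := by
  rw [trace_mul_comm, ← mul_assoc, hV, one_mul]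

lemma trace_psdSqrt_svd {n : ℕ} (X U V : Matrix (Fin n) (Fin n) ℝ) (σ : Fin n → ℝ)
    (hU : Uᵀ * U = 1) (hV : Vᵀ * V = 1) (hσ : ∀ i, 0 ≤ σ i)
    (hX : X = U * diagonal σ * Vᵀ) :
    (psdSqrt (Xᵀ * X)).trace = ∑ i, σ i := by
  have hXX : Xᵀ * X = V * diagonal (fun i => σ i ^ 2) * Vᵀ := by
    rw [hX]
    calc (U * diagonal σ * Vᵀ)ᵀ * (U * diagonal σ * Vᵀ)
        = V * diagonal σ * (Uᵀ * U) * diagonal σ * Vᵀ := by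
          simp only [transpose_mul, transpose_transpose, diagonal_transpose, mul_assoc]
      _ = V * (diagonal σ * diagonal σ) * Vᵀ := by rw [hU]; simp only [mul_one, mul_assoc]
      _ = V * diagonal (fun i => σ i ^ 2) * Vᵀ := by
          rw [diagonal_mul_diagonal]; congr 1; ext i; ring_nf
  rw [hXX, psdSqrt_conj V σ hV hσ, trace_conj _ _ hV, trace_diagonal]

lemma trace_psdSqrt_comm {n : ℕ} (X : Matrix (Fin n) (Fin n) ℝ) :
    (psdSqrt (Xᵀ * X)).trace = (psdSqrt (X * Xᵀ)).trace := by
  obtain ⟨U, V, σ, hU, hV, hσ, hX⟩ := exists_svd X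
  have hXT : Xᵀ = V * diagonal σ * Uᵀ := by
    rw [hX]; simp [transpose_mul, diagonal_transpose, mul_assoc]
  rw [trace_psdSqrt_svd X U V σ hU hV hσ hX]
  have : X * Xᵀ = (Xᵀ)ᵀ * Xᵀ := by rw [transpose_transpose]
  rw [this, trace_psdSqrt_svd Xᵀ V U σ hV hU hσ hXT]

lemma frobSq_trace {m : ℕ} (X : Matrix (Fin m) (Fin m) ℝ) :
    frobSq X = (Xᵀ * X).trace := by
  simp only [frobSq, Matrix.trace, Matrix.diag, mul_apply, transpose_apply, pow_two]
  exact Finset.sum_comm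

lemma diag_entry_le_one {n : ℕ} (R : Matrix (Fin n) (Fin n) ℝ) (hR : Rᵀ * R = 1) (i : Fin n) :
    R i i ≤ 1 := by
  have h1 : ∑ k, R k i * R k i = 1 := by
    have := congrFun (congrFun hR i) i
    simpa [mul_apply, transpose_apply, one_apply] using this
  have h2 : R i i * R i i ≤ 1 := by
    rw [← h1]
    exact Finset.single_le_sum (fun k _ => mul_self_nonneg (R k i)) (Finset.mem_univ i)
  nlinarith

lemma frob_expand {n : ℕ} (A B L M Q : Matrix (Fin n) (Fin n) ℝ)
    (hL : A = L * Lᵀ) (hM : B = M * Mᵀ) (hQ : Qᵀ * Q = 1) :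
    frobSq (L - M * Q) = A.trace + B.trace - 2 * (Qᵀ * (Mᵀ * L)).trace := by
  have hQQ : Q * Qᵀ = 1 := mul_eq_one_comm.mp hQ
  rw [frobSq_trace]
  have hexp : (L - M * Q)ᵀ * (L - M * Q)
      = Lᵀ * L - Lᵀ * (M * Q) - (Qᵀ * (Mᵀ * L)) + Qᵀ * Mᵀ * M * Q := by
    simp only [transpose_sub, transpose_mul, sub_mul, mul_sub]
    noncomm_ring
  rw [hexp]
  have h1 : (Lᵀ * L).trace = A.trace := by rw [hL, trace_mul_comm]
  have h2 : (Qᵀ * Mᵀ * M * Q).trace = B.trace := by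
    rw [trace_mul_comm, ← mul_assoc, ← mul_assoc, hQQ, one_mul, hM, trace_mul_comm]
  have h3 : (Lᵀ * (M * Q)).trace = (Qᵀ * (Mᵀ * L)).trace := by
    rw [← trace_transpose (Lᵀ * (M * Q))]
    congr 1
    simp [transpose_mul, mul_assoc]
  rw [trace_add, trace_sub, trace_sub, h1, h2, h3]
  ring

lemma trace_bound {n : ℕ} (U V Q : Matrix (Fin n) (Fin n) ℝ) (σ : Fin n → ℝ)
    (hU : Uᵀ * U = 1) (hV : Vᵀ * V = 1) (hQ : Qᵀ * Q = 1) (hσ : ∀ i, 0 ≤ σ i) :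
    (Qᵀ * (U * diagonal σ * Vᵀ)).trace ≤ ∑ i, σ i := by
  have hQQ : Q * Qᵀ = 1 := mul_eq_one_comm.mp hQ
  have hVV : V * Vᵀ = 1 := mul_eq_one_comm.mp hV
  set R : Matrix (Fin n) (Fin n) ℝ := Vᵀ * Qᵀ * U with hRdef
  have hR : Rᵀ * R = 1 := by
    simp only [hRdef, transpose_mul, transpose_transpose]
    calc Uᵀ * (Q * V) * (Vᵀ * Qᵀ * U) = Uᵀ * (Q * (V * Vᵀ) * Qᵀ) * U := by
          simp only [mul_assoc]
      _ = 1 := by rw [hVV, mul_one, hQQ, mul_one, hU]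
  have htr : (Qᵀ * (U * diagonal σ * Vᵀ)).trace = (R * diagonal σ).trace := by
    calc (Qᵀ * (U * diagonal σ * Vᵀ)).trace
        = ((Qᵀ * (U * diagonal σ)) * Vᵀ).trace := by simp only [mul_assoc]
      _ = (Vᵀ * (Qᵀ * (U * diagonal σ))).trace := trace_mul_comm _ _
      _ = (R * diagonal σ).trace := by rw [hRdef]; simp only [mul_assoc]
  rw [htr]
  have hformula : (R * diagonal σ).trace = ∑ i, R i i * σ i := by
    simp [Matrix.trace, Matrix.diag, mul_diagonal]
  rw [hformula]
  apply Finset.sum_le_sum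
  intro i _
  calc R i i * σ i ≤ 1 * σ i := mul_le_mul_of_nonneg_right (diag_entry_le_one R hR i) (hσ i)
    _ = σ i := one_mul _

/-- Procrustes representation of the Bures–Wasserstein distance:
`dist_BW(A,B) = min { ‖L − MQ‖_F : Q orthogonal }`. -/
theorem distBW_procrustes (n : ℕ) (A B L M : Matrix (Fin n) (Fin n) ℝ)
    (hA : A.PosSemidef) (hB : B.PosSemidef)
    (hL : A = L * Lᵀ) (hM : B = M * Mᵀ) :
    IsLeast {r : ℝ | ∃ Q : Matrix (Fin n) (Fin n) ℝ, Qᵀ * Q = 1 ∧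
        r = frobNorm (L - M * Q)}
      (Real.sqrt (distBWsq A B)) := by
  obtain ⟨U, V, σ, hU, hV, hσ, hC⟩ := exists_svd (Mᵀ * L)
  have hVV : V * Vᵀ = 1 := mul_eq_one_comm.mp hV
  set sA : Matrix (Fin n) (Fin n) ℝ := psdSqrt A with hsAdef
  set sB : Matrix (Fin n) (Fin n) ℝ := psdSqrt B with hsBdef
  have hsA : sA = hA.sqrt := psdSqrt_eq hA
  have hsB : sB = hB.sqrt := psdSqrt_eq hB
  have hsAsA : sA * sA = A := by rw [hsA]; exact hA.sqrt_mul_self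
  have hsBsB : sB * sB = B := by rw [hsB]; exact hB.sqrt_mul_self
  have hsAT : sAᵀ = sA := by
    rw [transpose_eq_conjTranspose, hsA]; exact hA.posSemidef_sqrt.isHermitian
  have hsBT : sBᵀ = sB := by
    rw [transpose_eq_conjTranspose, hsB]; exact hB.posSemidef_sqrt.isHermitian
  have key : (psdSqrt (sA * B * sA)).trace = ∑ i, σ i := by
    have e1 : (Mᵀ * L)ᵀ * (Mᵀ * L) = (sB * L)ᵀ * (sB * L) := by
      simp only [transpose_mul, transpose_transpose, hsBT]
      calc Lᵀ * M * (Mᵀ * L) = Lᵀ * (M * Mᵀ) * L := by simp only [mul_assoc]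
        _ = Lᵀ * (sB * sB) * L := by rw [hsBsB, ← hM]
        _ = Lᵀ * sB * (sB * L) := by simp only [mul_assoc]
    have e2 : (sB * L) * (sB * L)ᵀ = (sA * sB)ᵀ * (sA * sB) := by
      simp only [transpose_mul, hsBT, hsAT]
      calc sB * L * (Lᵀ * sB) = sB * (L * Lᵀ) * sB := by simp only [mul_assoc]
        _ = sB * (sA * sA) * sB := by rw [hsAsA, ← hL]
        _ = sB * sA * (sA * sB) := by simp only [mul_assoc]
    have e3 : (sA * sB) * (sA * sB)ᵀ = sA * B * sA := by
      simp only [transpose_mul, hsBT, hsAT]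
      calc sA * sB * (sB * sA) = sA * (sB * sB) * sA := by simp only [mul_assoc]
        _ = sA * B * sA := by rw [hsBsB]
    calc (psdSqrt (sA * B * sA)).trace
        = (psdSqrt ((sA * sB) * (sA * sB)ᵀ)).trace := by rw [e3]
      _ = (psdSqrt ((sA * sB)ᵀ * (sA * sB))).trace := (trace_psdSqrt_comm (sA * sB)).symm
      _ = (psdSqrt ((sB * L) * (sB * L)ᵀ)).trace := by rw [← e2]
      _ = (psdSqrt ((sB * L)ᵀ * (sB * L))).trace := (trace_psdSqrt_comm (sB * L)).symm
      _ = (psdSqrt ((Mᵀ * L)ᵀ * (Mᵀ * L))).trace := by rw [← e1]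
      _ = ∑ i, σ i := trace_psdSqrt_svd (Mᵀ * L) U V σ hU hV hσ hC
  have hdist : distBWsq A B = A.trace + B.trace - 2 * ∑ i, σ i := by
    rw [distBWsq, ← hsAdef, key]
  have hQ0 : (U * Vᵀ)ᵀ * (U * Vᵀ) = 1 := by
    calc (U * Vᵀ)ᵀ * (U * Vᵀ) = V * (Uᵀ * (U * Vᵀ)) := by
          simp only [transpose_mul, transpose_transpose, mul_assoc]
      _ = 1 := by rw [← mul_assoc Uᵀ U, hU, one_mul, hVV]
  constructor
  · refine ⟨U * Vᵀ, hQ0, ?_⟩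
    have htr : ((U * Vᵀ)ᵀ * (Mᵀ * L)).trace = ∑ i, σ i := by
      have hrw : (U * Vᵀ)ᵀ * (Mᵀ * L) = V * diagonal σ * Vᵀ := by
        rw [hC]
        calc (U * Vᵀ)ᵀ * (U * diagonal σ * Vᵀ)
            = V * (Uᵀ * U) * (diagonal σ * Vᵀ) := by
              simp only [transpose_mul, transpose_transpose, mul_assoc]
          _ = V * diagonal σ * Vᵀ := by rw [hU, mul_one, mul_assoc]
      rw [hrw, trace_conj _ _ hV, trace_diagonal]
    rw [frobNorm, frob_expand A B L M (U * Vᵀ) hL hM hQ0, htr, hdist]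
  · rintro r ⟨Q, hQ, rfl⟩
    rw [frobNorm]
    apply Real.sqrt_le_sqrt
    rw [frob_expand A B L M Q hL hM hQ, hdist]
    have hb := trace_bound U V Q σ hU hV hQ hσ
    rw [← hC] at hb
    linarith
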